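/- Let G be a linear algebraic group over an algebraically closed field with identity component G°, and let H ≤ G be a finite subgroup minimal with the property G = G°·H. Then the quotient map H → H/(H ∩ G°) is a Frattini epimorphism of finite groups; consequently H ∩ G° is contained in the Frattini subgroup Φ(H). -/

import Mathlib

open scoped Pointwise

lemma connectedComponentOfOne_normal (G : Type*) [Group G] [TopologicalSpace G]
    [IsTopologicalGroup G] : (Subgroup.connectedComponentOfOne G).Normal := by
  constructor
  intro n hn g
  have hc : Continuous (fun x : G => g * x * g⁻¹) := by continuity
  have := hc.image_connectedComponent_subset (1 : G)
  have h1 : g * (1 : G) * g⁻¹ = 1 := by group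
  rw [h1] at this
  exact this ⟨n, hn, rfl⟩

/-- Let `G` be a linear algebraic group (modelled as a topological group) with identity
component `G°`, and let `H ≤ G` be a finite subgroup, minimal with the property
`G = G°·H`. Then the quotient map `H → H/(H ∩ G°)` is a Frattini epimorphism of finite
groups (no proper subgroup of `H` together with the kernel `H ∩ G°` generates `H`);
consequently `H ∩ G° ≤ Φ(H)`. -/
theorem minimal_supplement_frattini
    {G : Type*} [Group G] [TopologicalSpace G] [IsTopologicalGroup G]
    (H : Subgroup G) (hHfin : Finite H)
    (hsup : ((Subgroup.connectedComponentOfOne G : Subgroup G) : Set G) * (H : Set G)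
      = Set.univ)
    (hmin : ∀ W : Subgroup G, W ≤ H →
      ((Subgroup.connectedComponentOfOne G : Subgroup G) : Set G) * (W : Set G)
        = Set.univ → W = H) :
    (∀ S : Subgroup ↥H,
        (Subgroup.connectedComponentOfOne G).subgroupOf H ⊔ S = ⊤ → S = ⊤) ∧
      (Subgroup.connectedComponentOfOne G).subgroupOf H ≤ frattini ↥H := by
  set N := Subgroup.connectedComponentOfOne G with hNdef
  have hNnorm : N.Normal := connectedComponentOfOne_normal G
  haveI hNHnorm : (N.subgroupOf H).Normal := hNnorm.subgroupOf H
  have main : ∀ S : Subgroup ↥H, N.subgroupOf H ⊔ S = ⊤ → S = ⊤ := by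
    intro S hS
    set W := S.map H.subtype with hWdef
    have hWle : W ≤ H := Subgroup.map_subtype_le S
    have hWsup : (N : Set G) * (W : Set G) = Set.univ := by
      apply Set.eq_univ_of_forall
      intro g
      have hg : g ∈ (N : Set G) * (H : Set G) := by rw [hsup]; trivial
      obtain ⟨c, hc, h, hh, rfl⟩ := hg
      have hmem : (⟨h, hh⟩ : ↥H) ∈ ((N.subgroupOf H : Set ↥H) * (S : Set ↥H)) := by
        rw [← Subgroup.normal_mul, hS]; trivial
      obtain ⟨n, hn, s, hs, hns⟩ := hmem
      refine ⟨c * (n : G), mul_mem hc hn, (s : G), ⟨s, hs, rfl⟩, ?_⟩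
      have : (n : ↥H) * s = ⟨h, hh⟩ := hns
      have hcoe : (n : G) * (s : G) = h := congrArg Subtype.val this
      show c * (n : G) * (s : G) = c * h
      rw [mul_assoc, hcoe]
    have hWH : W = H := hmin W hWle hWsup
    have : S.map H.subtype = (⊤ : Subgroup ↥H).map H.subtype := by
      rw [← hWdef, hWH, ← MonoidHom.range_eq_map, Subgroup.range_subtype]
    exact Subgroup.map_injective H.subtype_injective this
  refine ⟨main, ?_⟩
  have : IsCoatomic (Subgroup ↥H) := by infer_instance
  rw [frattini, Order.radical]
  refine le_iInf fun M => le_iInf fun hM => ?_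
  by_contra hle
  have hsup' : N.subgroupOf H ⊔ M = ⊤ := hM.2 _ (lt_of_le_of_ne le_sup_right (by
    intro h; exact hle (h ▸ le_sup_left)))
  exact hM.1 (main M hsup')
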